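/- arXiv:2502.09420 — 2 statements merged into one kernel-verified Lean document; each statement's English description precedes it below -/
import Mathlib

section
/- Truthful bidding is weakly dominant in optimistic XOR package bid selection: suppose 0 ∈ D and v(0) = 0. For a tuple of B bids (x_1,p_1),…,(x_B,p_B) ∈ ℝ^T × ℝ and a scenario index s, call x* an optimistic outcome for scenario s if x* is one of the profiles {0, x_1, …, x_B} and its bid surplus p − ⟨λ_s, x⟩ (where the profile 0 carries price 0 and each x_b carries price p_b) is maximal among the B+1 pairs {(0,0), (x_1,p_1), …, (x_B,p_B)}. Let v¹ be the supremum, over all bid tuples in (ℝ^T × ℝ)^B and all choices of optimistic outcomes x*_s for each scenario s ∈ {1,…,S}, of the expected profit Σ_{s=1}^S π_s (v(x*_s) − ⟨λ_s, x*_s⟩), valued in ℝ ∪ {−∞}; let v² be the same supremum restricted to truthful bid tuples, i.e. tuples with x_b ∈ D and p_b = v(x_b) for every b ∈ {1,…,B}. Then v² ≥ v¹. -/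
open scoped RealInnerProductSpace

noncomputable section

private lemma sum_eq_bot' {ι : Type*} (s : Finset ι) (f : ι → EReal) (i : ι)
    (hi : i ∈ s) (h : f i = ⊥) : ∑ j ∈ s, f j = ⊥ := by
  classical
  rw [← Finset.add_sum_erase s f hi, h, EReal.bot_add]

/-- Truthful bidding is weakly dominant in optimistic XOR package bid selection.

`v : ℝ^T → ℝ ∪ {−∞}` is modelled as an `EReal`-valued function never taking the
value `⊤`; its domain is `D = {x | v x ≠ ⊥}`. A bid is a pair `(x, p) ∈ ℝ^T × ℝ`.
For a tuple of `B` bids and a scenario `s`, `x*` is an optimistic outcome if it is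
the profile of a pair among `{(0,0), (x₁,p₁), …, (x_B,p_B)}` whose bid surplus
`p − ⟪λ_s, x⟫` is maximal among these `B+1` pairs. `v¹` is the supremum (in
`EReal = ℝ ∪ {±∞}`, where the expected profits themselves lie in `ℝ ∪ {−∞}`)
of the expected profit `∑ s, π s * (v x*_s − ⟪λ_s, x*_s⟫)` over all bid tuples and
optimistic outcomes; `v²` is the same supremum restricted to truthful bid tuples,
i.e. those with `x_b ∈ D` and `p_b = v x_b` for every `b`. Then `v² ≥ v¹`. -/
theorem truthful_bidding_weakly_dominant
    (T B S : ℕ) (hT : 0 < T) (hB : 0 < B) (hS : 0 < S)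
    (v : EuclideanSpace ℝ (Fin T) → EReal) (hv : ∀ x, v x ≠ ⊤)
    (D : Set (EuclideanSpace ℝ (Fin T))) (hD : D = {x | v x ≠ ⊥})
    (lam : Fin S → EuclideanSpace ℝ (Fin T))
    (π : Fin S → ℝ) (hπ : ∀ s, 0 ≤ π s) (hπ1 : ∑ s, π s = 1)
    (h0 : (0 : EuclideanSpace ℝ (Fin T)) ∈ D) (hv0 : v 0 = 0)
    (v1 v2 : EReal)
    (hv1 : v1 = sSup {r : EReal |
      ∃ bids : Fin B → EuclideanSpace ℝ (Fin T) × ℝ,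
      ∃ xs : Fin S → EuclideanSpace ℝ (Fin T),
        (∀ s : Fin S, ∃ p : ℝ,
          ((xs s, p) = ((0 : EuclideanSpace ℝ (Fin T)), (0 : ℝ)) ∨ ∃ b, (xs s, p) = bids b) ∧
          (∀ y : EuclideanSpace ℝ (Fin T), ∀ q : ℝ,
            ((y, q) = ((0 : EuclideanSpace ℝ (Fin T)), (0 : ℝ)) ∨ ∃ b, (y, q) = bids b) →
            q - ⟪lam s, y⟫ ≤ p - ⟪lam s, xs s⟫)) ∧
        r = ∑ s, (π s : EReal) * (v (xs s) - ((⟪lam s, xs s⟫ : ℝ) : EReal))})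
    (hv2 : v2 = sSup {r : EReal |
      ∃ bids : Fin B → EuclideanSpace ℝ (Fin T) × ℝ,
        (∀ b, (bids b).1 ∈ D ∧ (((bids b).2 : ℝ) : EReal) = v (bids b).1) ∧
      ∃ xs : Fin S → EuclideanSpace ℝ (Fin T),
        (∀ s : Fin S, ∃ p : ℝ,
          ((xs s, p) = ((0 : EuclideanSpace ℝ (Fin T)), (0 : ℝ)) ∨ ∃ b, (xs s, p) = bids b) ∧
          (∀ y : EuclideanSpace ℝ (Fin T), ∀ q : ℝ,
            ((y, q) = ((0 : EuclideanSpace ℝ (Fin T)), (0 : ℝ)) ∨ ∃ b, (y, q) = bids b) →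
            q - ⟪lam s, y⟫ ≤ p - ⟪lam s, xs s⟫)) ∧
        r = ∑ s, (π s : EReal) * (v (xs s) - ((⟪lam s, xs s⟫ : ℝ) : EReal))}) :
    v2 ≥ v1 := by
  subst hv1 hv2 hD
  refine sSup_le ?_
  rintro r ⟨bids, xs, hopt, rfl⟩
  by_cases hbad : ∃ s : Fin S, π s ≠ 0 ∧ v (xs s) = ⊥
  · -- the sum is ⊥
    obtain ⟨s, hs, hbs⟩ := hbad
    have : ∑ s, (π s : EReal) * (v (xs s) - ((⟪lam s, xs s⟫ : ℝ) : EReal)) = ⊥ := by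
      apply sum_eq_bot' _ _ s (Finset.mem_univ s)
      rw [hbs, EReal.bot_sub]
      exact EReal.coe_mul_bot_of_pos (lt_of_le_of_ne (hπ s) (Ne.symm hs))
    rw [this]; exact bot_le
  push_neg at hbad
  -- truthful bids
  classical
  set tbids : Fin B → EuclideanSpace ℝ (Fin T) × ℝ :=
    fun b => if h : v (bids b).1 ≠ ⊥ then ((bids b).1, (v (bids b).1).toReal)
      else (0, 0) with htb
  set cand : Option (Fin B) → EuclideanSpace ℝ (Fin T) × ℝ := fun o => o.elim ((0:EuclideanSpace ℝ (Fin T)), (0:ℝ)) tbids with hcand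
  have hcandT : ∀ o, (cand o).1 ∈ {x | v x ≠ ⊥} ∧ (((cand o).2 : ℝ) : EReal) = v (cand o).1 := by
    rintro (_ | b)
    · exact ⟨by simpa [hcand] using h0, by simp [hcand, hv0]⟩
    · simp only [hcand, Option.elim, htb]
      by_cases h : v (bids b).1 ≠ ⊥
      · rw [dif_pos h]
        exact ⟨h, EReal.coe_toReal (hv _) h⟩
      · rw [dif_neg h]
        exact ⟨h0, by simp [hv0]⟩
  have hmax : ∀ s : Fin S, ∃ o : Option (Fin B), ∀ o',
      (cand o').2 - ⟪lam s, (cand o').1⟫ ≤ (cand o).2 - ⟪lam s, (cand o).1⟫ := by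
    intro s
    obtain ⟨o, -, ho⟩ := Finset.exists_max_image (Finset.univ : Finset (Option (Fin B)))
      (fun o => (cand o).2 - ⟪lam s, (cand o).1⟫) ⟨none, Finset.mem_univ _⟩
    exact ⟨o, fun o' => ho o' (Finset.mem_univ _)⟩
  choose o ho using hmax
  set xs' : Fin S → EuclideanSpace ℝ (Fin T) := fun s => (cand (o s)).1 with hxs'
  refine le_trans (b := ∑ s, (π s : EReal) * (v (xs' s) - ((⟪lam s, xs' s⟫ : ℝ) : EReal)))
    ?_ (le_sSup ?_)
  swap
  · refine ⟨tbids, fun b => ?_, xs', fun s => ?_, rfl⟩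
    · have := hcandT (some b); simpa [hcand] using this
    · refine ⟨(cand (o s)).2, ?_, ?_⟩
      · rcases h : o s with _ | b
        · left; simp [hxs', h, hcand]
        · right; exact ⟨b, by simp [hxs', h, hcand]⟩
      · rintro y q (hyq | ⟨b, hyq⟩)
        · have := ho s none
          simp only [hcand, Option.elim] at this
          rw [show y = (0:EuclideanSpace ℝ (Fin T)) from congrArg Prod.fst hyq,
            show q = (0:ℝ) from congrArg Prod.snd hyq]
          exact this
        · have := ho s (some b)
          simp only [hcand, Option.elim] at this
          rw [show y = (tbids b).1 from congrArg Prod.fst hyq,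
            show q = (tbids b).2 from congrArg Prod.snd hyq]
          exact this
  -- now r ≤ r'
  refine Finset.sum_le_sum fun s _ => ?_
  by_cases hps : π s = 0
  · simp [hps]
  · have hpos : 0 < π s := lt_of_le_of_ne (hπ s) (Ne.symm hps)
    have hnb : v (xs s) ≠ ⊥ := hbad s hps
    have hva : v (xs s) = (((v (xs s)).toReal : ℝ) : EReal) := (EReal.coe_toReal (hv _) hnb).symm
    have hvb : v (xs' s) = (((cand (o s)).2 : ℝ) : EReal) := ((hcandT (o s)).2).symm
    rw [hva, hvb, ← EReal.coe_sub, ← EReal.coe_sub, ← EReal.coe_mul, ← EReal.coe_mul,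
      EReal.coe_le_coe_iff]
    apply mul_le_mul_of_nonneg_left ?_ (hπ s)
    -- key inequality
    obtain ⟨p, hp1, -⟩ := hopt s
    rcases hp1 with hp | ⟨b, hp⟩
    · have hx0 : xs s = 0 := congrArg Prod.fst hp
      have ha : (v (xs s)).toReal = 0 := by rw [hx0, hv0]; simp
      have h2 := ho s none
      have hc0 : cand none = ((0 : EuclideanSpace ℝ (Fin T)), (0 : ℝ)) := rfl
      rw [hc0] at h2
      rw [ha, hx0]
      exact h2
    · have hx : xs s = (bids b).1 := congrArg Prod.fst hp
      have hDb : v (bids b).1 ≠ ⊥ := hx ▸ hnb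
      have htbb : cand (some b) = ((bids b).1, (v (bids b).1).toReal) := by
        simp [hcand, htb, hDb]
      have h2 := ho s (some b)
      rw [htbb] at h2
      rw [hx]
      exact h2
end
end

section
/- Wasserstein bound on the expected profit loss (Theorem 1, stated via couplings): suppose D is nonempty, ‖x‖ ≤ M for every x ∈ D, and for every λ ∈ ℝ^T the supremum defining ψ(λ) = sup_{x ∈ D} (v(x) − ⟨λ, x⟩) is finite and attained. Fix scenarios λ_1, …, λ_S ∈ ℝ^T with probabilities π_s ≥ 0 summing to 1, let x̄_s ∈ D attain ψ(λ_s) for each s, define φ(λ) = max_{1 ≤ s ≤ S} (v(x̄_s) − ⟨λ, x̄_s⟩) and the profit loss Γ(λ) = ψ(λ) − φ(λ), and let Q = Σ_{s=1}^S π_s δ_{λ_s}. Let P be any Borel probability measure on ℝ^T such that Γ is P-integrable. Then for every Borel probability measure μ on ℝ^T × ℝ^T whose first marginal is P and whose second marginal is Q, and for which (λ_1, λ_2) ↦ ‖λ_1 − λ_2‖ is μ-integrable, the expected profit loss satisfies ∫ Γ dP ≤ 2M · ∫ ‖λ_1 − λ_2‖ dμ(λ_1, λ_2). (Taking the infimum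 over all such couplings gives E_P[Γ] ≤ 2M · d_W(P, Q), where d_W denotes the order-1 Wasserstein distance.) -/
open scoped RealInnerProductSpace
open MeasureTheory

noncomputable section

/-- Wasserstein bound on the expected profit loss (Theorem 1, stated via couplings).
`v : ℝ^T → ℝ ∪ {−∞}` is modelled as an `EReal`-valued function never taking `⊤`, with
nonempty domain `D = {x | v x ≠ ⊥}` satisfying `‖x‖ ≤ M` for every `x ∈ D` (so
`(v x).toReal` is the real value of `v x` for `x ∈ D`). For every `λ` the indirect
utility `ψ λ = sup_{x ∈ D} (v x − ⟪λ, x⟫)` is finite and attained (`IsGreatest`),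
`x̄_s ∈ D` attains `ψ (λ_s)` for each scenario `s`,
`φ λ = max_{1 ≤ s ≤ S} (v x̄_s − ⟪λ, x̄_s⟫)`, and the profit loss is `Γ = ψ − φ`.
Let `Q = ∑ s, π s • δ_{λ_s}` and let `P` be any Borel probability measure with `Γ`
`P`-integrable. Then for every coupling `μ` of `P` and `Q` for which
`(λ₁, λ₂) ↦ ‖λ₁ − λ₂‖` is `μ`-integrable,
`∫ Γ dP ≤ 2 M * ∫ ‖λ₁ − λ₂‖ dμ`. -/
theorem wasserstein_bound_expected_profit_loss
    (T S : ℕ) (hT : 0 < T) (hS : 0 < S)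
    (v : EuclideanSpace ℝ (Fin T) → EReal) (hv : ∀ x, v x ≠ ⊤)
    (D : Set (EuclideanSpace ℝ (Fin T))) (hD : D = {x | v x ≠ ⊥})
    (hDne : D.Nonempty)
    (M : ℝ) (hnorm : ∀ x ∈ D, ‖x‖ ≤ M)
    (ψ : EuclideanSpace ℝ (Fin T) → ℝ)
    (hψ : ∀ l : EuclideanSpace ℝ (Fin T),
      IsGreatest {r : ℝ | ∃ x ∈ D, r = (v x).toReal - ⟪l, x⟫} (ψ l))
    (lam : Fin S → EuclideanSpace ℝ (Fin T))
    (π : Fin S → ℝ) (hπ : ∀ s, 0 ≤ π s) (hπ1 : ∑ s, π s = 1)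
    (xbar : Fin S → EuclideanSpace ℝ (Fin T))
    (hxbarD : ∀ s, xbar s ∈ D)
    (hxbar : ∀ s, (v (xbar s)).toReal - ⟪lam s, xbar s⟫ = ψ (lam s))
    (φ : EuclideanSpace ℝ (Fin T) → ℝ)
    (hφ : ∀ l : EuclideanSpace ℝ (Fin T),
      IsGreatest {r : ℝ | ∃ s : Fin S, r = (v (xbar s)).toReal - ⟪l, xbar s⟫} (φ l))
    (Γ : EuclideanSpace ℝ (Fin T) → ℝ) (hΓ : ∀ l, Γ l = ψ l - φ l)
    (Q : Measure (EuclideanSpace ℝ (Fin T)))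
    (hQ : Q = ∑ s, ENNReal.ofReal (π s) • Measure.dirac (lam s))
    (P : Measure (EuclideanSpace ℝ (Fin T))) [IsProbabilityMeasure P]
    (hΓP : Integrable Γ P)
    (μ : Measure (EuclideanSpace ℝ (Fin T) × EuclideanSpace ℝ (Fin T)))
    [IsProbabilityMeasure μ]
    (hμ₁ : μ.map Prod.fst = P) (hμ₂ : μ.map Prod.snd = Q)
    (hdist : Integrable (fun p : EuclideanSpace ℝ (Fin T) × EuclideanSpace ℝ (Fin T) =>
      ‖p.1 - p.2‖) μ) :
    ∫ l, Γ l ∂P ≤ 2 * M * ∫ p, ‖p.1 - p.2‖ ∂μ := by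
  obtain ⟨x0, hx0⟩ := hDne
  have hM : 0 ≤ M := le_trans (norm_nonneg x0) (hnorm x0 hx0)
  -- Lipschitz-type estimates
  have hψlip : ∀ a b : EuclideanSpace ℝ (Fin T), ψ a - ψ b ≤ M * ‖a - b‖ := by
    intro a b
    obtain ⟨x, hxD, hx⟩ := (hψ a).1
    have h2 : (v x).toReal - ⟪b, x⟫ ≤ ψ b := (hψ b).2 ⟨x, hxD, rfl⟩
    have h3 : ⟪b - a, x⟫ ≤ M * ‖a - b‖ := by
      calc ⟪b - a, x⟫ ≤ ‖b - a‖ * ‖x‖ := real_inner_le_norm _ _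
        _ ≤ ‖b - a‖ * M := by
            exact mul_le_mul_of_nonneg_left (hnorm x hxD) (norm_nonneg _)
        _ = M * ‖a - b‖ := by rw [norm_sub_rev]; ring
    have h4 : ⟪b - a, x⟫ = ⟪b, x⟫ - ⟪a, x⟫ := inner_sub_left _ _ _
    linarith [hx ▸ (le_refl (ψ a))]
  have hφlip : ∀ a b : EuclideanSpace ℝ (Fin T), φ a - φ b ≤ M * ‖a - b‖ := by
    intro a b
    obtain ⟨s, hx⟩ := (hφ a).1
    have h2 : (v (xbar s)).toReal - ⟪b, xbar s⟫ ≤ φ b := (hφ b).2 ⟨s, rfl⟩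
    have h3 : ⟪b - a, xbar s⟫ ≤ M * ‖a - b‖ := by
      calc ⟪b - a, xbar s⟫ ≤ ‖b - a‖ * ‖xbar s‖ := real_inner_le_norm _ _
        _ ≤ ‖b - a‖ * M := by
            exact mul_le_mul_of_nonneg_left (hnorm _ (hxbarD s)) (norm_nonneg _)
        _ = M * ‖a - b‖ := by rw [norm_sub_rev]; ring
    have h4 : ⟪b - a, xbar s⟫ = ⟪b, xbar s⟫ - ⟪a, xbar s⟫ := inner_sub_left _ _ _
    linarith
  have hφψ : ∀ l, φ l ≤ ψ l := by
    intro l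
    obtain ⟨s, hs⟩ := (hφ l).1
    have := (hψ l).2 ⟨xbar s, hxbarD s, rfl⟩
    linarith
  have heq : ∀ s, ψ (lam s) = φ (lam s) := by
    intro s
    refine le_antisymm ?_ (hφψ _)
    have := (hφ (lam s)).2 ⟨s, rfl⟩
    linarith [hxbar s]
  have hkey : ∀ (l : EuclideanSpace ℝ (Fin T)) (s : Fin S),
      Γ l ≤ 2 * M * ‖l - lam s‖ := by
    intro l s
    have h1 := hψlip l (lam s)
    have h2 := hφlip (lam s) l
    have h3 : ‖lam s - l‖ = ‖l - lam s‖ := norm_sub_rev _ _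
    rw [hΓ l]
    have := heq s
    nlinarith
  -- almost everywhere p.2 is a scenario point
  have hmeasS : MeasurableSet (Set.range lam) := (Set.finite_range lam).measurableSet
  have hae : ∀ᵐ p ∂μ, p.2 ∈ Set.range lam := by
    rw [ae_iff]
    have hset : {p : EuclideanSpace ℝ (Fin T) × EuclideanSpace ℝ (Fin T) |
        ¬ p.2 ∈ Set.range lam} = Prod.snd ⁻¹' (Set.range lam)ᶜ := rfl
    rw [hset, ← Measure.map_apply measurable_snd hmeasS.compl, hμ₂, hQ]
    simp [Measure.finset_sum_apply, Measure.dirac_apply' _ hmeasS.compl]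
  have hsm : AEStronglyMeasurable Γ (μ.map Prod.fst) := by
    rw [hμ₁]; exact hΓP.aestronglyMeasurable
  have hint1 : Integrable (fun p : EuclideanSpace ℝ (Fin T) × EuclideanSpace ℝ (Fin T)
      => Γ p.1) μ := by
    have := (integrable_map_measure hsm measurable_fst.aemeasurable).mp
      (by rw [hμ₁]; exact hΓP)
    exact this
  have hint2 : Integrable (fun p : EuclideanSpace ℝ (Fin T) × EuclideanSpace ℝ (Fin T)
      => 2 * M * ‖p.1 - p.2‖) μ := hdist.const_mul _
  have hP : ∫ l, Γ l ∂P = ∫ p, Γ p.1 ∂μ := by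
    rw [← hμ₁, integral_map measurable_fst.aemeasurable hsm]
  rw [hP, ← integral_const_mul]
  refine integral_mono_ae hint1 hint2 ?_
  filter_upwards [hae] with p hp
  obtain ⟨s, hs⟩ := hp
  rw [← hs]
  exact hkey p.1 s
end
end
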